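/- Define q(t) = -x⟨t⟩·t·t' as a formal power series. Then q(t) ∈ 1 + t·ℤ[μ⃗][[t]], with expansion q(t) = 1 - μ₂t² - μ₁μ₂t³ - (μ₁²μ₂+μ₄)t⁴ - (μ₁³μ₂+2μ₁μ₄+μ₂μ₃)t⁵ - ...; in particular the coefficient of t vanishes. -/

import Mathlib

set_option maxHeartbeats 4000000


noncomputable section

/-- The coefficient ring `ℤ[μ₁,μ₂,μ₃,μ₄,μ₆]`. -/
abbrev CoefRing : Type := MvPolynomial (Fin 5) ℤ

def μ1 : CoefRing := MvPolynomial.X 0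
def μ2 : CoefRing := MvPolynomial.X 1
def μ3 : CoefRing := MvPolynomial.X 2
def μ4 : CoefRing := MvPolynomial.X 3
def μ6 : CoefRing := MvPolynomial.X 4

open PowerSeries in
/-- The functional equation `s = (1 + μ₂s + μ₄s² + μ₆s³)t² + (μ₁s + μ₃s²)t`
satisfied by `s = 1/x` in the arithmetic parameter `t = -x/y` of the curve
`y² + (μ₁x+μ₃)y = x³ + μ₂x² + μ₄x + μ₆`. -/
def SFunEq (s : PowerSeries CoefRing) : Prop :=
  s = (1 + C μ2 * s + C μ4 * s ^ 2 + C μ6 * s ^ 3) * X ^ 2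
      + (C μ1 * s + C μ3 * s ^ 2) * X

/-- Embedding of power series into formal Laurent series. -/
abbrev toL : PowerSeries CoefRing →+* LaurentSeries CoefRing :=
  HahnSeries.ofPowerSeries ℤ CoefRing

/-- The Laurent series `t`. -/
def tL : LaurentSeries CoefRing := HahnSeries.single (1 : ℤ) (1 : CoefRing)

/-- Constant Laurent series. -/
abbrev CL : CoefRing →+* LaurentSeries CoefRing := HahnSeries.C

/-- `IsXY s x y` says: `s` is the canonical solution of the functional equation,
`x = 1/s` (the expansion `x⟨t⟩` of the `x`-coordinate) and `y = -x/t`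
(the expansion `y⟨t⟩` of the `y`-coordinate). -/
structure IsXY (s : PowerSeries CoefRing)
    (x y : LaurentSeries CoefRing) : Prop where
  s0 : PowerSeries.constantCoeff s = 0
  seq : SFunEq s
  hx : x * toL s = 1
  hy : y * tL = -x

open PowerSeries in
theorem scoeffs (s : PowerSeries CoefRing) (h0 : constantCoeff s = 0) (hs : SFunEq s) :
    coeff 1 s = 0 ∧ coeff 2 s = 1 ∧ coeff 3 s = μ1 ∧
    coeff 4 s = μ1^2 + μ2 ∧ coeff 5 s = μ1^3 + 2*μ1*μ2 + μ3 := by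
  have h1 := congrArg (coeff 1) hs
  have h2 := congrArg (coeff 2) hs
  have h3 := congrArg (coeff 3) hs
  have h4 := congrArg (coeff 4) hs
  have h5 := congrArg (coeff 5) hs
  simp [coeff_mul, coeff_X_pow, coeff_one, coeff_C,
    Finset.Nat.sum_antidiagonal_eq_sum_range_succ_mk, Finset.sum_range_succ,
    pow_succ, pow_zero, one_mul, coeff_zero_eq_constantCoeff, h0] at h1 h2 h3 h4 h5
  simp [coeff_X, h1] at h2 h3 h4 h5
  simp [h2] at h3 h4 h5
  simp [h3] at h4 h5
  rw [h4] at h5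
  refine ⟨h1, h2, h3, by rw [h4]; ring, by rw [h5]; ring⟩


open PowerSeries in
/-- `q(t) = -x⟨t⟩·t·t'` is a power series in `1 + t·ℤ[μ⃗][[t]]`, with
`q = 1 - μ₂t² - μ₁μ₂t³ - (μ₁²μ₂+μ₄)t⁴ - (μ₁³μ₂+2μ₁μ₄+μ₂μ₃)t⁵ - ⋯`; in
particular the coefficient of `t` vanishes. -/
theorem statement13 (s : PowerSeries CoefRing) (x y : LaurentSeries CoefRing)
    (h : IsXY s x y) (T' : PowerSeries CoefRing)
    (hT' : toL T' * (y + CL μ1 * x + CL μ3) = x) :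
    ∃ q : PowerSeries CoefRing,
      toL q = -(x * tL * toL T') ∧
      constantCoeff q = 1 ∧
      coeff 1 q = 0 ∧
      coeff 2 q = -μ2 ∧
      coeff 3 q = -(μ1 * μ2) ∧
      coeff 4 q = -(μ1 ^ 2 * μ2 + μ4) ∧
      coeff 5 q = -(μ1 ^ 3 * μ2 + 2 * μ1 * μ4 + μ2 * μ3) := by
  obtain ⟨hc1, hc2, hc3, hc4, hc5⟩ := scoeffs s h.s0 h.seq
  set w : PowerSeries CoefRing :=
    1 + C μ2 * s + C μ4 * s ^ 2 + C μ6 * s ^ 3 with hw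
  have hw0 : constantCoeff w = 1 := by
    simp [hw, map_add, map_mul, map_pow, h.s0]
  set q : PowerSeries CoefRing := invOfUnit w 1 with hqdef
  have hq : w * q = 1 := mul_invOfUnit w 1 (by simp [hw0])
  -- power series identity for T'
  have key : toL T' * (CL μ1 * tL + CL μ3 * (tL * toL s) - 1) = tL := by
    linear_combination (tL * toL s) * hT' - toL T' * toL s * h.hy
      - toL T' * (CL μ1 * tL - 1) * h.hx + tL * h.hx
  have hvT : T' * (C μ1 * X + C μ3 * (X * s) - 1) = X := by
    apply HahnSeries.ofPowerSeries_injective (Γ := ℤ)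
    simpa [map_mul, map_add, map_sub, HahnSeries.ofPowerSeries_X,
      HahnSeries.ofPowerSeries_C, tL] using key
  have hseq := h.seq
  unfold SFunEq at hseq
  have hsv : s * (1 - C μ1 * X - C μ3 * s * X) = X ^ 2 * w := by
    rw [hw]
    linear_combination hseq
  have hv0 : (1 - C μ1 * X - C μ3 * s * X : PowerSeries CoefRing) ≠ 0 := by
    intro hcon
    have := congrArg (constantCoeff) hcon
    simp [map_sub, map_mul, map_one] at this
  have keyPS : X * T' + q * s = 0 := by
    have hz : (X * T' + q * s) * (1 - C μ1 * X - C μ3 * s * X) = 0 := by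
      linear_combination (-X : PowerSeries CoefRing) * hvT + q * hsv + X ^ 2 * hq
    exact (mul_eq_zero.mp hz).resolve_right hv0
  have hsL : toL s ≠ 0 := by
    rw [map_ne_zero_iff _ (HahnSeries.ofPowerSeries_injective (Γ := ℤ))]
    intro hcon
    have := congrArg (coeff 2) hcon
    rw [hc2] at this
    simp [μ1] at this
  have hK : tL * toL T' + toL q * toL s = 0 := by
    have := congrArg toL keyPS
    simpa [map_add, map_mul, HahnSeries.ofPowerSeries_X, tL] using this
  have hmain : toL q = -(x * tL * toL T') := by
    have hz : (toL q + x * tL * toL T') * toL s = 0 := by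
      linear_combination hK + tL * toL T' * h.hx
    have := (mul_eq_zero.mp hz).resolve_right hsL
    linear_combination this
  -- coefficients of q
  have k0 := congrArg (coeff 0) hq
  have k1 := congrArg (coeff 1) hq
  have k2 := congrArg (coeff 2) hq
  have k3 := congrArg (coeff 3) hq
  have k4 := congrArg (coeff 4) hq
  have k5 := congrArg (coeff 5) hq
  rw [hw] at k0 k1 k2 k3 k4 k5
  simp [coeff_mul, coeff_one, coeff_C,
    Finset.Nat.sum_antidiagonal_eq_sum_range_succ_mk, Finset.sum_range_succ,
    pow_succ, pow_zero, one_mul, coeff_zero_eq_constantCoeff, h.s0,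
    hc1, hc2, hc3, hc4, hc5] at k0 k1 k2 k3 k4 k5
  have e2 : coeff 2 q = -μ2 := by linear_combination k2 - μ2 * k0
  have e3 : coeff 3 q = -(μ1 * μ2) := by
    linear_combination k3 - μ2 * k1 - μ2 * μ1 * k0
  have e4 : coeff 4 q = -(μ1 ^ 2 * μ2 + μ4) := by
    linear_combination k4 - μ2 * e2 - μ2 * μ1 * k1 - (μ2 * (μ1 * μ1 + μ2) + μ4) * k0
  have e5 : coeff 5 q = -(μ1 ^ 3 * μ2 + 2 * μ1 * μ4 + μ2 * μ3) := by
    linear_combination k5 - μ2 * e3 - μ1 * μ2 * e2 - (μ2 * (μ1 * μ1 + μ2) + μ4) * k1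
      - (μ2 * (μ1 * μ1 * μ1 + 2 * μ1 * μ2 + μ3) + μ4 * (μ1 + μ1)) * k0
  exact ⟨q, hmain, k0, k1, e2, e3, e4, e5⟩
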